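/- In the polynomial semidomain ℕ₀[x], the polynomials x+1, x²+x+1, x³+1, and x⁴+x²+1 are irreducible, and consequently x⁵+x⁴+x³+x²+x+1 = (x+1)(x⁴+x²+1) = (x²+x+1)(x³+1) has two distinct factorizations into irreducibles; hence ℕ₀[x] is not a unique factorization semidomain. -/

import Mathlib

open Polynomial

/-- A commutative monoid with zero is atomic if every nonzero nonunit is a finite product of
irreducible elements. -/
def Atomic (M : Type) [CommMonoidWithZero M] : Prop :=
  ∀ a : M, a ≠ 0 → ¬ IsUnit a → ∃ l : Multiset M, (∀ b ∈ l, Irreducible b) ∧ l.prod = a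

/-- A commutative monoid with zero is a unique factorization monoid if it is atomic and
factorizations into irreducibles are unique up to order and associates. -/
def IsUFS (M : Type) [CommMonoidWithZero M] : Prop :=
  Atomic M ∧ ∀ l m : Multiset M, (∀ b ∈ l, Irreducible b) → (∀ b ∈ m, Irreducible b) →
    Associated l.prod m.prod → Multiset.Rel Associated l m

private lemma unitPoly {p : ℕ[X]} (h : IsUnit p) : p = 1 := by
  obtain ⟨r, hr, rfl⟩ := Polynomial.isUnit_iff.mp h
  simp [Nat.isUnit_iff.mp hr]

private lemma coeffMul1 (p q : ℕ[X]) :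
    (p*q).coeff 1 = p.coeff 0 * q.coeff 1 + p.coeff 1 * q.coeff 0 := by
  simp [coeff_mul, Finset.Nat.sum_antidiagonal_eq_sum_range_succ_mk, Finset.sum_range_succ]

private lemma coeffMul2 (p q : ℕ[X]) :
    (p*q).coeff 2 = p.coeff 0 * q.coeff 2 + p.coeff 1 * q.coeff 1 + p.coeff 2 * q.coeff 0 := by
  simp [coeff_mul, Finset.Nat.sum_antidiagonal_eq_sum_range_succ_mk, Finset.sum_range_succ]

private lemma leadNe {p : ℕ[X]} (hp : p ≠ 0) : p.coeff p.natDegree ≠ 0 := by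
  rw [coeff_natDegree]
  exact leadingCoeff_ne_zero.mpr hp

private lemma unitOfDegZero {p q P : ℕ[X]} (hd : p.natDegree = 0) (h : p * q = P)
    (k : ℕ) (hk : P.coeff k = 1) : IsUnit p := by
  have hc := congrArg (fun r => Polynomial.coeff r k) h
  rw [p.eq_C_of_natDegree_eq_zero hd] at hc ⊢
  simp only [coeff_C_mul, hk] at hc
  rw [Nat.eq_one_of_mul_eq_one_right hc]; simp

private lemma noMixed {a b : ℕ[X]} (hb : b ≠ 0) (hb1 : b.natDegree = 1)
    (c0 : 1 = a.coeff 0 * b.coeff 0)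
    (c1 : 0 = a.coeff 0 * b.coeff 1 + a.coeff 1 * b.coeff 0) : False := by
  have ea0 := Nat.eq_one_of_mul_eq_one_right c0.symm
  have eb0 := Nat.eq_one_of_mul_eq_one_left c0.symm
  have lb : b.coeff 1 ≠ 0 := hb1 ▸ leadNe hb
  rw [ea0, eb0, one_mul, mul_one] at c1
  omega

theorem stmt16 :
    Irreducible (X + 1 : Polynomial ℕ) ∧
    Irreducible (X ^ 2 + X + 1 : Polynomial ℕ) ∧
    Irreducible (X ^ 3 + 1 : Polynomial ℕ) ∧
    Irreducible (X ^ 4 + X ^ 2 + 1 : Polynomial ℕ) ∧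
    (X + 1) * (X ^ 4 + X ^ 2 + 1) =
      (X ^ 5 + X ^ 4 + X ^ 3 + X ^ 2 + X + 1 : Polynomial ℕ) ∧
    (X ^ 2 + X + 1) * (X ^ 3 + 1) =
      (X ^ 5 + X ^ 4 + X ^ 3 + X ^ 2 + X + 1 : Polynomial ℕ) ∧
    ¬ Multiset.Rel Associated ({X + 1, X ^ 4 + X ^ 2 + 1} : Multiset (Polynomial ℕ))
        ({X ^ 2 + X + 1, X ^ 3 + 1} : Multiset (Polynomial ℕ)) ∧
    ¬ IsUFS (Polynomial ℕ) := by
  have d1 : (X + 1 : ℕ[X]).natDegree = 1 := by compute_degree!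
  have d2 : (X ^ 2 + X + 1 : ℕ[X]).natDegree = 2 := by compute_degree!
  have d3 : (X ^ 3 + 1 : ℕ[X]).natDegree = 3 := by compute_degree!
  have d4 : (X ^ 4 + X ^ 2 + 1 : ℕ[X]).natDegree = 4 := by compute_degree!
  -- general nonunit helper
  have notUnit : ∀ (P : ℕ[X]) (n : ℕ), P.natDegree = n → n ≠ 0 → ¬ IsUnit P := by
    intro P n hdeg hn h
    have := unitPoly h
    rw [this] at hdeg
    simp at hdeg
    omega
  have nz1 : (X + 1 : ℕ[X]) ≠ 0 := by
    intro h; simpa using congrArg (fun r => Polynomial.coeff r 0) h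
  have nz2 : (X ^ 2 + X + 1 : ℕ[X]) ≠ 0 := by
    intro h; simpa using congrArg (fun r => Polynomial.coeff r 0) h
  have nz3 : (X ^ 3 + 1 : ℕ[X]) ≠ 0 := by
    intro h; simpa using congrArg (fun r => Polynomial.coeff r 0) h
  have nz4 : (X ^ 4 + X ^ 2 + 1 : ℕ[X]) ≠ 0 := by
    intro h; simpa using congrArg (fun r => Polynomial.coeff r 0) h
  have i1 : Irreducible (X + 1 : ℕ[X]) := by
    refine ⟨notUnit _ 1 d1 one_ne_zero, fun a b hab => ?_⟩
    have ha : a ≠ 0 := by rintro rfl; rw [zero_mul] at hab; exact nz1 hab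
    have hb : b ≠ 0 := by rintro rfl; rw [mul_zero] at hab; exact nz1 hab
    have hd : a.natDegree + b.natDegree = 1 := by
      rw [← natDegree_mul ha hb, ← hab, d1]
    rcases Nat.eq_zero_or_pos a.natDegree with h0 | h0
    · exact Or.inl (unitOfDegZero h0 hab.symm 0 (by simp))
    · have h0' : b.natDegree = 0 := by omega
      exact Or.inr (unitOfDegZero h0' (mul_comm a b ▸ hab.symm) 0 (by simp))
  have i2 : Irreducible (X ^ 2 + X + 1 : ℕ[X]) := by
    refine ⟨notUnit _ 2 d2 two_ne_zero, fun a b hab => ?_⟩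
    have ha : a ≠ 0 := by rintro rfl; rw [zero_mul] at hab; exact nz2 hab
    have hb : b ≠ 0 := by rintro rfl; rw [mul_zero] at hab; exact nz2 hab
    have hd : a.natDegree + b.natDegree = 2 := by
      rw [← natDegree_mul ha hb, ← hab, d2]
    rcases Nat.eq_zero_or_pos a.natDegree with h0 | h0
    · exact Or.inl (unitOfDegZero h0 hab.symm 0 (by simp))
    rcases Nat.eq_zero_or_pos b.natDegree with h0' | h0'
    · exact Or.inr (unitOfDegZero h0' (mul_comm a b ▸ hab.symm) 0 (by simp))
    exfalso
    have ha1 : a.natDegree = 1 := by omega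
    have hb1 : b.natDegree = 1 := by omega
    have c0 : (1:ℕ) = a.coeff 0 * b.coeff 0 := by
      simpa [coeff_one] using congrArg (fun r => Polynomial.coeff r 0) hab
    have c1 : (1:ℕ) = a.coeff 0 * b.coeff 1 + a.coeff 1 * b.coeff 0 := by
      simpa [coeffMul1, coeff_one, coeff_X] using congrArg (fun r => Polynomial.coeff r 1) hab
    have c2 : (1:ℕ) = a.coeff 0 * b.coeff 2 + a.coeff 1 * b.coeff 1 + a.coeff 2 * b.coeff 0 := by
      simpa [coeffMul2, coeff_one, coeff_X] using congrArg (fun r => Polynomial.coeff r 2) hab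
    have za : a.coeff 2 = 0 := coeff_eq_zero_of_natDegree_lt (by omega)
    have zb : b.coeff 2 = 0 := coeff_eq_zero_of_natDegree_lt (by omega)
    rw [za, zb, mul_zero, zero_mul, zero_add, add_zero] at c2
    have ea0 := Nat.eq_one_of_mul_eq_one_right c0.symm
    have eb0 := Nat.eq_one_of_mul_eq_one_left c0.symm
    have ea1 := Nat.eq_one_of_mul_eq_one_right c2.symm
    have eb1 := Nat.eq_one_of_mul_eq_one_left c2.symm
    rw [ea0, eb0, ea1, eb1] at c1
    omega
  have i3 : Irreducible (X ^ 3 + 1 : ℕ[X]) := by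
    refine ⟨notUnit _ 3 d3 three_ne_zero, fun a b hab => ?_⟩
    have ha : a ≠ 0 := by rintro rfl; rw [zero_mul] at hab; exact nz3 hab
    have hb : b ≠ 0 := by rintro rfl; rw [mul_zero] at hab; exact nz3 hab
    have hd : a.natDegree + b.natDegree = 3 := by
      rw [← natDegree_mul ha hb, ← hab, d3]
    rcases Nat.eq_zero_or_pos a.natDegree with h0 | h0
    · exact Or.inl (unitOfDegZero h0 hab.symm 0 (by simp))
    rcases Nat.eq_zero_or_pos b.natDegree with h0' | h0'
    · exact Or.inr (unitOfDegZero h0' (mul_comm a b ▸ hab.symm) 0 (by simp))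
    exfalso
    rcases Nat.lt_or_ge a.natDegree 2 with hcase | hcase
    · have hb1 : b.natDegree = 2 := by omega
      rw [mul_comm a b] at hab
      have c0 : (1:ℕ) = b.coeff 0 * a.coeff 0 := by
        simpa [coeff_one] using congrArg (fun r => Polynomial.coeff r 0) hab
      have c1 : (0:ℕ) = b.coeff 0 * a.coeff 1 + b.coeff 1 * a.coeff 0 := by
        simpa [coeffMul1, coeff_one, coeff_X] using congrArg (fun r => Polynomial.coeff r 1) hab
      exact noMixed ha (by omega) c0 c1
    · have hb1 : b.natDegree = 1 := by omega
      have c0 : (1:ℕ) = a.coeff 0 * b.coeff 0 := by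
        simpa [coeff_one] using congrArg (fun r => Polynomial.coeff r 0) hab
      have c1 : (0:ℕ) = a.coeff 0 * b.coeff 1 + a.coeff 1 * b.coeff 0 := by
        simpa [coeffMul1, coeff_one, coeff_X] using congrArg (fun r => Polynomial.coeff r 1) hab
      exact noMixed hb hb1 c0 c1
  have i4 : Irreducible (X ^ 4 + X ^ 2 + 1 : ℕ[X]) := by
    refine ⟨notUnit _ 4 d4 four_ne_zero, fun a b hab => ?_⟩
    have ha : a ≠ 0 := by rintro rfl; rw [zero_mul] at hab; exact nz4 hab
    have hb : b ≠ 0 := by rintro rfl; rw [mul_zero] at hab; exact nz4 hab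
    have hd : a.natDegree + b.natDegree = 4 := by
      rw [← natDegree_mul ha hb, ← hab, d4]
    rcases Nat.eq_zero_or_pos a.natDegree with h0 | h0
    · exact Or.inl (unitOfDegZero h0 hab.symm 0 (by simp))
    rcases Nat.eq_zero_or_pos b.natDegree with h0' | h0'
    · exact Or.inr (unitOfDegZero h0' (mul_comm a b ▸ hab.symm) 0 (by simp))
    exfalso
    rcases Nat.lt_or_ge a.natDegree 2 with hcase | hcase
    · -- a has degree 1
      have hb3 : b.natDegree = 3 := by omega
      rw [mul_comm a b] at hab
      have c0 : (1:ℕ) = b.coeff 0 * a.coeff 0 := by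
        simpa [coeff_one] using congrArg (fun r => Polynomial.coeff r 0) hab
      have c1 : (0:ℕ) = b.coeff 0 * a.coeff 1 + b.coeff 1 * a.coeff 0 := by
        simpa [coeffMul1, coeff_one, coeff_X] using congrArg (fun r => Polynomial.coeff r 1) hab
      exact noMixed ha (by omega) c0 c1
    rcases Nat.lt_or_ge b.natDegree 2 with hcase' | hcase'
    · -- b has degree 1
      have c0 : (1:ℕ) = a.coeff 0 * b.coeff 0 := by
        simpa [coeff_one] using congrArg (fun r => Polynomial.coeff r 0) hab
      have c1 : (0:ℕ) = a.coeff 0 * b.coeff 1 + a.coeff 1 * b.coeff 0 := by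
        simpa [coeffMul1, coeff_one, coeff_X] using congrArg (fun r => Polynomial.coeff r 1) hab
      exact noMixed hb (by omega) c0 c1
    · -- both degree 2
      have ha2 : a.natDegree = 2 := by omega
      have hb2 : b.natDegree = 2 := by omega
      have c0 : (1:ℕ) = a.coeff 0 * b.coeff 0 := by
        simpa [coeff_one] using congrArg (fun r => Polynomial.coeff r 0) hab
      have c1 : (0:ℕ) = a.coeff 0 * b.coeff 1 + a.coeff 1 * b.coeff 0 := by
        simpa [coeffMul1, coeff_one, coeff_X] using congrArg (fun r => Polynomial.coeff r 1) hab
      have c2 : (1:ℕ) = a.coeff 0 * b.coeff 2 + a.coeff 1 * b.coeff 1 + a.coeff 2 * b.coeff 0 := by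
        simpa [coeffMul2, coeff_one, coeff_X] using congrArg (fun r => Polynomial.coeff r 2) hab
      have ea0 := Nat.eq_one_of_mul_eq_one_right c0.symm
      have eb0 := Nat.eq_one_of_mul_eq_one_left c0.symm
      have la : a.coeff 2 ≠ 0 := ha2 ▸ leadNe ha
      have lb : b.coeff 2 ≠ 0 := hb2 ▸ leadNe hb
      rw [ea0, eb0, one_mul, mul_one] at c1 c2
      have ea1 : a.coeff 1 = 0 := by omega
      rw [ea1, zero_mul, add_zero] at c2
      omega
  have prod1 : (X + 1) * (X ^ 4 + X ^ 2 + 1) =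
      (X ^ 5 + X ^ 4 + X ^ 3 + X ^ 2 + X + 1 : Polynomial ℕ) := by ring
  have prod2 : (X ^ 2 + X + 1) * (X ^ 3 + 1) =
      (X ^ 5 + X ^ 4 + X ^ 3 + X ^ 2 + X + 1 : Polynomial ℕ) := by ring
  have assocEq : ∀ p q : ℕ[X], Associated p q → p = q := by
    rintro p q ⟨u, hu⟩
    rw [← hu, unitPoly u.isUnit, mul_one]
  have notRel : ¬ Multiset.Rel Associated ({X + 1, X ^ 4 + X ^ 2 + 1} : Multiset (Polynomial ℕ))
      ({X ^ 2 + X + 1, X ^ 3 + 1} : Multiset (Polynomial ℕ)) := by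
    intro h
    have heq := Multiset.rel_eq.mp (h.mono (fun a _ b _ hab => assocEq a b hab))
    have hmem : (X + 1 : ℕ[X]) ∈ ({X ^ 2 + X + 1, X ^ 3 + 1} : Multiset (Polynomial ℕ)) := by
      rw [← heq]; simp
    rw [Multiset.insert_eq_cons, Multiset.mem_cons, Multiset.mem_singleton] at hmem
    rcases hmem with hmem | hmem
    · have := congrArg Polynomial.natDegree hmem
      rw [d1, d2] at this; omega
    · have := congrArg Polynomial.natDegree hmem
      rw [d1, d3] at this; omega
  refine ⟨i1, i2, i3, i4, prod1, prod2, notRel, ?_⟩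
  rintro ⟨-, h⟩
  apply notRel
  apply h
  · intro b hb
    rw [Multiset.insert_eq_cons, Multiset.mem_cons, Multiset.mem_singleton] at hb
    rcases hb with rfl | rfl
    · exact i1
    · exact i4
  · intro b hb
    rw [Multiset.insert_eq_cons, Multiset.mem_cons, Multiset.mem_singleton] at hb
    rcases hb with rfl | rfl
    · exact i2
    · exact i3
  · have e1 : ({X + 1, X ^ 4 + X ^ 2 + 1} : Multiset (Polynomial ℕ)).prod
        = (X + 1) * (X ^ 4 + X ^ 2 + 1) := by
      simp [Multiset.insert_eq_cons, Multiset.prod_cons]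
    have e2 : ({X ^ 2 + X + 1, X ^ 3 + 1} : Multiset (Polynomial ℕ)).prod
        = (X ^ 2 + X + 1) * (X ^ 3 + 1) := by
      simp [Multiset.insert_eq_cons, Multiset.prod_cons]
    rw [e1, e2, prod1, prod2]
    exact Associated.refl _
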